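/- Suppose b = c = 0 in the matrix m = [[p^a, β, γ₁],[0,1,γ₂],[0,0,1]]. Then u ∈ U_m if and only if u is symmetric and uy ∈ M_2(Z_p), where y = [[p^a, β],[0,1]]. Moreover p^{-a}[[1, -β],[-β, β²]] ∈ U_m, and U_m ⊆ ker χ if and only if β² ≡ D (mod p^a). In particular, if D is not a square mod p (p inert case) and a ≥ 1, then U_m ⊄ ker χ. -/

import Mathlib

open scoped Matrix

/-- The matrix y = [[p^a, β],[0, p^b]]. -/
noncomputable def yMat (p a b : ℕ) [Fact p.Prime] (β : ℚ_[p]) : Matrix (Fin 2) (Fin 2) ℚ_[p] :=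
  !![(p : ℚ_[p]) ^ a, β; 0, (p : ℚ_[p]) ^ b]

/-- Membership in U_m: u is symmetric, u·y is integral, and the row vector
(γ₁,γ₂)·u·y lies in p^c ℤ_p ⊕ p^{min(b,c)} ℤ_p. -/
def memUm (p : ℕ) [Fact p.Prime] (a b c : ℕ) (β γ₁ γ₂ : ℚ_[p])
    (u : Matrix (Fin 2) (Fin 2) ℚ_[p]) : Prop :=
  u.IsSymm ∧ (∀ i j, ‖(u * yMat p a b β) i j‖ ≤ 1) ∧
  ‖γ₁ * (u * yMat p a b β) 0 0 + γ₂ * (u * yMat p a b β) 1 0‖ ≤ (p : ℝ) ^ (-(c : ℤ)) ∧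
  ‖γ₁ * (u * yMat p a b β) 0 1 + γ₂ * (u * yMat p a b β) 1 1‖ ≤ (p : ℝ) ^ (-(min b c : ℤ))

/-- χ(n(u)) = ψ(-D·u₁₁ + u₂₂). -/
noncomputable def chiUm (p : ℕ) [Fact p.Prime] (ψ : ℚ_[p] → ℂ) (D : ℚ_[p])
    (u : Matrix (Fin 2) (Fin 2) ℚ_[p]) : ℂ :=
  ψ (-D * u 0 0 + u 1 1)

/- STATEMENT 9: Case b = c = 0.  Then u ∈ U_m iff u is symmetric and u·y is
integral; p^{-a}[[1,-β],[-β,β²]] ∈ U_m; U_m ⊆ ker χ iff β² ≡ D (mod p^a);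
and if D is not a square mod p and a ≥ 1 then U_m ⊄ ker χ. -/
theorem stmt9 {p : ℕ} [Fact p.Prime] (hp2 : p ≠ 2) (a : ℕ)
    (β γ₁ γ₂ D : ℚ_[p]) (ψ : ℚ_[p] → ℂ)
    (hψ : ∀ x y, ψ (x + y) = ψ x * ψ y) (hψtriv : ∀ x, ψ x = 1 ↔ ‖x‖ ≤ 1)
    (hD : ‖D‖ = 1) (hβ : ‖β‖ ≤ 1) (hγ₁ : ‖γ₁‖ ≤ 1) (hγ₂ : ‖γ₂‖ ≤ 1) :
    (∀ u, memUm p a 0 0 β γ₁ γ₂ u ↔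
      (u.IsSymm ∧ ∀ i j, ‖(u * yMat p a 0 β) i j‖ ≤ 1)) ∧
    memUm p a 0 0 β γ₁ γ₂ ((((p : ℚ_[p]) ^ a)⁻¹) • !![1, -β; -β, β ^ 2]) ∧
    ((∀ u, memUm p a 0 0 β γ₁ γ₂ u → chiUm p ψ D u = 1) ↔
      ‖β ^ 2 - D‖ ≤ (p : ℝ) ^ (-(a : ℤ))) ∧
    ((¬ ∃ s : ℚ_[p], ‖s‖ ≤ 1 ∧ ‖s ^ 2 - D‖ ≤ (p : ℝ)⁻¹) → 1 ≤ a →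
      ¬ (∀ u, memUm p a 0 0 β γ₁ γ₂ u → chiUm p ψ D u = 1)) := by

  have hprime : p.Prime := Fact.out
  have hpR : (1:ℝ) < p := by exact_mod_cast hprime.one_lt
  have hpa : ((p:ℚ_[p])^a) ≠ 0 := by
    apply pow_ne_zero
    exact_mod_cast hprime.ne_zero
  have hnpa : ‖((p:ℚ_[p])^a)‖ = (p:ℝ) ^ (-(a:ℤ)) := by
    simp [Padic.norm_p_pow]
  have hkey : (p:ℝ) ^ (-(a:ℤ)) * (p:ℝ) ^ (a:ℤ) = 1 := by
    rw [← zpow_add₀ (by positivity : (p:ℝ) ≠ 0)]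
    simp
  -- part 1
  have h1 : ∀ u, memUm p a 0 0 β γ₁ γ₂ u ↔
      (u.IsSymm ∧ ∀ i j, ‖(u * yMat p a 0 β) i j‖ ≤ 1) := by
    intro u
    constructor
    · rintro ⟨hs, hi, -, -⟩; exact ⟨hs, hi⟩
    · rintro ⟨hs, hi⟩
      refine ⟨hs, hi, ?_, ?_⟩ <;>
      · simp only [Nat.cast_zero, neg_zero, zpow_zero, min_self]
        refine le_trans (Padic.nonarchimedean _ _) (max_le ?_ ?_) <;>
        · rw [Padic.padicNormE.mul]
          exact mul_le_one₀ (by assumption) (norm_nonneg _) (hi _ _)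
  -- entry computations for a general u
  have e00 : ∀ u : Matrix (Fin 2) (Fin 2) ℚ_[p],
      (u * yMat p a 0 β) 0 0 = u 0 0 * (p:ℚ_[p])^a := by
    intro u; simp [yMat, Matrix.mul_apply, Fin.sum_univ_two]
  have e01 : ∀ u : Matrix (Fin 2) (Fin 2) ℚ_[p],
      (u * yMat p a 0 β) 0 1 = u 0 0 * β + u 0 1 := by
    intro u; simp [yMat, Matrix.mul_apply, Fin.sum_univ_two]
  have e10 : ∀ u : Matrix (Fin 2) (Fin 2) ℚ_[p],
      (u * yMat p a 0 β) 1 0 = u 1 0 * (p:ℚ_[p])^a := by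
    intro u; simp [yMat, Matrix.mul_apply, Fin.sum_univ_two]
  have e11 : ∀ u : Matrix (Fin 2) (Fin 2) ℚ_[p],
      (u * yMat p a 0 β) 1 1 = u 1 0 * β + u 1 1 := by
    intro u; simp [yMat, Matrix.mul_apply, Fin.sum_univ_two]
  -- part 2
  set u₀ : Matrix (Fin 2) (Fin 2) ℚ_[p] :=
    (((p : ℚ_[p]) ^ a)⁻¹) • !![1, -β; -β, β ^ 2] with hu₀
  have hu00 : u₀ 0 0 = ((p:ℚ_[p])^a)⁻¹ := by simp [hu₀]
  have hu01 : u₀ 0 1 = ((p:ℚ_[p])^a)⁻¹ * (-β) := by simp [hu₀]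
  have hu10 : u₀ 1 0 = ((p:ℚ_[p])^a)⁻¹ * (-β) := by simp [hu₀]
  have hu11 : u₀ 1 1 = ((p:ℚ_[p])^a)⁻¹ * β^2 := by simp [hu₀]
  have h2 : memUm p a 0 0 β γ₁ γ₂ u₀ := by
    rw [h1]
    constructor
    · unfold Matrix.IsSymm
      ext i j
      fin_cases i <;> fin_cases j <;> simp [hu₀]
    · intro i j
      fin_cases i <;> fin_cases j <;>
        simp only [Fin.zero_eta, Fin.mk_one, Fin.isValue]
      · rw [e00, hu00, inv_mul_cancel₀ hpa]; simp
      · rw [e01, hu00, hu01]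
        have : ((p:ℚ_[p])^a)⁻¹ * β + ((p:ℚ_[p])^a)⁻¹ * (-β) = 0 := by ring
        rw [this]; simp
      · rw [e10, hu10]
        have : ((p:ℚ_[p])^a)⁻¹ * (-β) * (p:ℚ_[p])^a = -β := by
          field_simp
        rw [this]; simpa using hβ
      · rw [e11, hu10, hu11]
        have : ((p:ℚ_[p])^a)⁻¹ * (-β) * β + ((p:ℚ_[p])^a)⁻¹ * β^2 = 0 := by ring
        rw [this]; simp
  -- part 3
  have h3 : (∀ u, memUm p a 0 0 β γ₁ γ₂ u → chiUm p ψ D u = 1) ↔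
      ‖β ^ 2 - D‖ ≤ (p : ℝ) ^ (-(a : ℤ)) := by
    constructor
    · intro h
      have hm := h u₀ h2
      unfold chiUm at hm
      rw [hu00, hu11] at hm
      have harg : -D * ((p:ℚ_[p])^a)⁻¹ + ((p:ℚ_[p])^a)⁻¹ * β^2
          = ((p:ℚ_[p])^a)⁻¹ * (β^2 - D) := by ring
      rw [harg, hψtriv] at hm
      rw [Padic.padicNormE.mul, norm_inv, hnpa] at hm
      have hinv : ((p:ℝ) ^ (-(a:ℤ)))⁻¹ = (p:ℝ) ^ (a:ℤ) := by
        rw [← zpow_neg]; simp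
      rw [hinv] at hm
      calc ‖β^2 - D‖ = (p:ℝ) ^ (-(a:ℤ)) * ((p:ℝ) ^ (a:ℤ) * ‖β^2 - D‖) := by
            rw [← mul_assoc, hkey, one_mul]
        _ ≤ (p:ℝ) ^ (-(a:ℤ)) * 1 := by
            apply mul_le_mul_of_nonneg_left hm (by positivity)
        _ = (p:ℝ) ^ (-(a:ℤ)) := mul_one _
    · intro hle u hu
      rw [h1] at hu
      obtain ⟨hs, hi⟩ := hu
      have h10 : u 1 0 = u 0 1 := hs.apply 0 1
      unfold chiUm
      rw [hψtriv]
      have harg : -D * u 0 0 + u 1 1 =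
          (β^2 - D) * ((p:ℚ_[p])^a)⁻¹ * ((u * yMat p a 0 β) 0 0)
            + ((u * yMat p a 0 β) 1 1 - β * ((u * yMat p a 0 β) 0 1)) := by
        rw [e00, e01, e11, h10]
        field_simp
        ring
      rw [harg]
      refine le_trans (Padic.nonarchimedean _ _) (max_le ?_ ?_)
      · rw [Padic.padicNormE.mul, Padic.padicNormE.mul, norm_inv, hnpa]
        have hinv : ((p:ℝ) ^ (-(a:ℤ)))⁻¹ = (p:ℝ) ^ (a:ℤ) := by
          rw [← zpow_neg]; simp
        rw [hinv]
        have h1' : ‖β^2 - D‖ * (p:ℝ) ^ (a:ℤ) ≤ 1 := by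
          calc ‖β^2 - D‖ * (p:ℝ) ^ (a:ℤ) ≤ (p:ℝ) ^ (-(a:ℤ)) * (p:ℝ) ^ (a:ℤ) := by
                apply mul_le_mul_of_nonneg_right hle (by positivity)
            _ = 1 := hkey
        exact mul_le_one₀ h1' (norm_nonneg _) (hi _ _)
      · refine le_trans (le_trans (le_of_eq (by rw [sub_eq_add_neg]))
          (Padic.nonarchimedean _ _)) (max_le (hi _ _) ?_)
        rw [norm_neg, Padic.padicNormE.mul]
        exact mul_le_one₀ hβ (norm_nonneg _) (hi _ _)
  refine ⟨h1, h2, h3, ?_⟩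
  -- part 4
  intro hns ha hall
  apply hns
  refine ⟨β, hβ, le_trans (h3.mp hall) ?_⟩
  have : (p:ℝ)⁻¹ = (p:ℝ) ^ (-1:ℤ) := by simp
  rw [this]
  exact zpow_le_zpow_right₀ (le_of_lt hpR) (by omega)
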